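/- (Memory perturbation bound, Proposition 3.) Let W_f, W_i, W_c be real m × p matrices, U_f, U_i, U_c real m × n matrices, b_f, b_i, b_c ∈ ℝᵐ, and let x, x̂ ∈ ℝᵖ, h, ĥ ∈ ℝⁿ, and s ∈ ℝᵐ with every component s_j ∈ [−1, 1]. Define f(x,h) = σ∘(W_f·x + U_f·h + b_f), i(x,h) = σ∘(W_i·x + U_i·h + b_i), ci(x,h) = tanh∘(W_c·x + U_c·h + b_c), and the updated cell state S(x,h) = s ⊙ f(x,h) + i(x,h) ⊙ ci(x,h). Then ‖S(x̂,ĥ) − S(x,h)‖ ≤ γ_x·‖x̂ − x‖ + γ_h·‖ĥ − h‖, where γ_x = (1/4)·‖W_f‖ + (17/16)·(‖W_i‖ + ‖W_c‖) and γ_h = (1/4)·‖U_f‖ + (17/16)·(‖U_i‖ + ‖U_c‖). -/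

import Mathlib

/-- The logistic sigmoid `σ(x) = 1 / (1 + e^{-x})`. -/
noncomputable def sigmoid (x : ℝ) : ℝ := 1 / (1 + Real.exp (-x))

/-- Componentwise application of `f : ℝ → ℝ` to a vector of `ℝⁿ`. -/
noncomputable def cwise {n : ℕ} (f : ℝ → ℝ) (v : EuclideanSpace ℝ (Fin n)) :
    EuclideanSpace ℝ (Fin n) := WithLp.toLp 2 (fun i => f (v i))

/-- Hadamard (componentwise) product of vectors of `ℝⁿ`. -/
def hadam {n : ℕ} (v w : EuclideanSpace ℝ (Fin n)) : EuclideanSpace ℝ (Fin n) :=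
  WithLp.toLp 2 (fun i => v i * w i)

/-- The operator norm of a real matrix with respect to Euclidean norms. -/
noncomputable def matOpNorm {m n : ℕ} (W : Matrix (Fin m) (Fin n) ℝ) : ℝ :=
  ‖LinearMap.toContinuousLinearMap (Matrix.toEuclideanLin W)‖

lemma my_hasDerivAt_tanh (x : ℝ) : HasDerivAt Real.tanh (1 / Real.cosh x ^ 2) x := by
  have htanh : Real.tanh = fun y => Real.sinh y / Real.cosh y :=
    funext fun y => Real.tanh_eq_sinh_div_cosh y
  have h := (Real.hasDerivAt_sinh x).div (Real.hasDerivAt_cosh x) (Real.cosh_pos x).ne'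
  rw [htanh]
  refine h.congr_deriv ?_
  have h1 := Real.cosh_sq_sub_sinh_sq x
  congr 1
  nlinarith [Real.cosh_pos x]

lemma my_hasDerivAt_sigmoid (x : ℝ) :
    HasDerivAt sigmoid (Real.exp (-x) / (1 + Real.exp (-x)) ^ 2) x := by
  have hg : HasDerivAt (fun y : ℝ => 1 + Real.exp (-y)) (-Real.exp (-x)) x := by
    have := ((Real.hasDerivAt_exp (-x)).comp x (hasDerivAt_neg x)).const_add (1 : ℝ)
    simpa using this
  have hpos : (0 : ℝ) < 1 + Real.exp (-x) := by positivity
  have h := (hasDerivAt_const x (1 : ℝ)).div hg hpos.ne'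
  have : sigmoid = fun y : ℝ => 1 / (1 + Real.exp (-y)) := rfl
  rw [this]
  refine h.congr_deriv ?_
  ring

lemma tanh_lip (a b : ℝ) : |Real.tanh a - Real.tanh b| ≤ 1 * |a - b| := by
  have := convex_univ.norm_image_sub_le_of_norm_hasDerivWithin_le
    (f := Real.tanh) (f' := fun y => 1 / Real.cosh y ^ 2) (C := 1)
    (fun y _ => (my_hasDerivAt_tanh y).hasDerivWithinAt)
    (fun y _ => by
      have h1 := Real.one_le_cosh y
      rw [Real.norm_eq_abs, abs_of_nonneg (by positivity)]
      rw [div_le_one (by positivity)]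
      nlinarith)
    (Set.mem_univ b) (Set.mem_univ a)
  simpa using this

lemma sigmoid_lip (a b : ℝ) : |sigmoid a - sigmoid b| ≤ (1 / 4) * |a - b| := by
  have := convex_univ.norm_image_sub_le_of_norm_hasDerivWithin_le
    (f := sigmoid) (f' := fun y => Real.exp (-y) / (1 + Real.exp (-y)) ^ 2) (C := 1 / 4)
    (fun y _ => (my_hasDerivAt_sigmoid y).hasDerivWithinAt)
    (fun y _ => by
      have h1 := Real.exp_pos (-y)
      rw [Real.norm_eq_abs, abs_of_nonneg (by positivity)]
      rw [div_le_iff₀ (by positivity)]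
      nlinarith [sq_nonneg (1 - Real.exp (-y))])
    (Set.mem_univ b) (Set.mem_univ a)
  simpa using this

lemma abs_sigmoid_le (t : ℝ) : |sigmoid t| ≤ 1 := by
  have h1 := Real.exp_pos (-t)
  rw [sigmoid, abs_of_nonneg (by positivity), div_le_one (by positivity)]
  linarith

lemma abs_tanh_le (t : ℝ) : |Real.tanh t| ≤ 1 := by
  have hc := Real.cosh_pos t
  have h1 : Real.cosh t - Real.sinh t = Real.exp (-t) := Real.cosh_sub_sinh t
  have h2 : Real.sinh t + Real.cosh t = Real.exp t := Real.sinh_add_cosh t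
  have he1 := Real.exp_pos (-t)
  have he2 := Real.exp_pos t
  rw [Real.tanh_eq_sinh_div_cosh, abs_div, abs_of_pos hc, div_le_one hc, abs_le]
  constructor <;> linarith

lemma enorm_mono {m : ℕ} (u w : EuclideanSpace ℝ (Fin m)) (h : ∀ i, |u i| ≤ |w i|) :
    ‖u‖ ≤ ‖w‖ := by
  rw [EuclideanSpace.norm_eq, EuclideanSpace.norm_eq]
  apply Real.sqrt_le_sqrt
  apply Finset.sum_le_sum
  intro i _
  rw [Real.norm_eq_abs, Real.norm_eq_abs]
  exact pow_le_pow_left₀ (abs_nonneg _) (h i) 2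

lemma hadam_norm_le {m : ℕ} (v w : EuclideanSpace ℝ (Fin m)) (hv : ∀ i, |v i| ≤ 1) :
    ‖hadam v w‖ ≤ ‖w‖ := by
  apply enorm_mono
  intro i
  show |v i * w i| ≤ |w i|
  rw [abs_mul]
  exact mul_le_of_le_one_left (abs_nonneg _) (hv i)

lemma matOpNorm_bound {m n : ℕ} (W : Matrix (Fin m) (Fin n) ℝ) (v : EuclideanSpace ℝ (Fin n)) :
    ‖Matrix.toEuclideanLin W v‖ ≤ matOpNorm W * ‖v‖ := by
  exact (LinearMap.toContinuousLinearMap (Matrix.toEuclideanLin W)).le_opNorm v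

lemma gate_diff {m n p : ℕ} (W : Matrix (Fin m) (Fin p) ℝ) (U : Matrix (Fin m) (Fin n) ℝ)
    (b : EuclideanSpace ℝ (Fin m)) (x xhat : EuclideanSpace ℝ (Fin p))
    (h hhat : EuclideanSpace ℝ (Fin n)) (g : ℝ → ℝ) (L : ℝ) (hL : 0 ≤ L)
    (hg : ∀ a b : ℝ, |g a - g b| ≤ L * |a - b|) :
    ‖cwise g (Matrix.toEuclideanLin W xhat + Matrix.toEuclideanLin U hhat + b) -
      cwise g (Matrix.toEuclideanLin W x + Matrix.toEuclideanLin U h + b)‖ ≤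
      L * (matOpNorm W * ‖xhat - x‖ + matOpNorm U * ‖hhat - h‖) := by
  set v := Matrix.toEuclideanLin W xhat + Matrix.toEuclideanLin U hhat + b with hv
  set w := Matrix.toEuclideanLin W x + Matrix.toEuclideanLin U h + b with hw
  have step1 : ‖cwise g v - cwise g w‖ ≤ ‖L • (v - w)‖ := by
    apply enorm_mono
    intro i
    have : (cwise g v - cwise g w) i = g (v i) - g (w i) := by
      simp [cwise]
    rw [this]
    have h2 : (L • (v - w)) i = L * (v i - w i) := by simp
    rw [h2, abs_mul, abs_of_nonneg hL]
    exact hg _ _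
  have step2 : ‖L • (v - w)‖ = L * ‖v - w‖ := by
    rw [norm_smul, Real.norm_eq_abs, abs_of_nonneg hL]
  have hvw : v - w = Matrix.toEuclideanLin W (xhat - x) + Matrix.toEuclideanLin U (hhat - h) := by
    rw [hv, hw, map_sub, map_sub]
    abel
  have step3 : ‖v - w‖ ≤ matOpNorm W * ‖xhat - x‖ + matOpNorm U * ‖hhat - h‖ := by
    rw [hvw]
    exact (norm_add_le _ _).trans (add_le_add (matOpNorm_bound W _) (matOpNorm_bound U _))
  calc ‖cwise g v - cwise g w‖ ≤ L * ‖v - w‖ := step1.trans_eq step2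
    _ ≤ L * (matOpNorm W * ‖xhat - x‖ + matOpNorm U * ‖hhat - h‖) :=
      mul_le_mul_of_nonneg_left step3 hL

/-- Memory (cell-state) perturbation bound (Proposition 3): with
`f(x,h) = σ∘(W_f·x + U_f·h + b_f)`, `i(x,h) = σ∘(W_i·x + U_i·h + b_i)`,
`ci(x,h) = tanh∘(W_c·x + U_c·h + b_c)`, `S(x,h) = s ⊙ f(x,h) + i(x,h) ⊙ ci(x,h)`,
and `s_j ∈ [−1,1]` for all `j`, one has
`‖S(x̂,ĥ) − S(x,h)‖ ≤ γ_x·‖x̂ − x‖ + γ_h·‖ĥ − h‖` where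
`γ_x = (1/4)·‖W_f‖ + (17/16)·(‖W_i‖ + ‖W_c‖)` and
`γ_h = (1/4)·‖U_f‖ + (17/16)·(‖U_i‖ + ‖U_c‖)`. -/
theorem memory_perturbation_le
    (m n p : ℕ)
    (Wf Wi Wc : Matrix (Fin m) (Fin p) ℝ) (Uf Ui Uc : Matrix (Fin m) (Fin n) ℝ)
    (bf bi bc : EuclideanSpace ℝ (Fin m))
    (x xhat : EuclideanSpace ℝ (Fin p)) (h hhat : EuclideanSpace ℝ (Fin n))
    (s : EuclideanSpace ℝ (Fin m)) (hs : ∀ j, s j ∈ Set.Icc (-1 : ℝ) 1)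
    (fgate igate ci S :
      EuclideanSpace ℝ (Fin p) → EuclideanSpace ℝ (Fin n) → EuclideanSpace ℝ (Fin m))
    (hfgate : ∀ x' h', fgate x' h' =
      cwise sigmoid (Matrix.toEuclideanLin Wf x' + Matrix.toEuclideanLin Uf h' + bf))
    (higate : ∀ x' h', igate x' h' =
      cwise sigmoid (Matrix.toEuclideanLin Wi x' + Matrix.toEuclideanLin Ui h' + bi))
    (hci : ∀ x' h', ci x' h' =
      cwise Real.tanh (Matrix.toEuclideanLin Wc x' + Matrix.toEuclideanLin Uc h' + bc))
    (hS : ∀ x' h', S x' h' = hadam s (fgate x' h') + hadam (igate x' h') (ci x' h')) :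
    ‖S xhat hhat - S x h‖ ≤
      ((1 / 4) * matOpNorm Wf + (17 / 16) * (matOpNorm Wi + matOpNorm Wc)) * ‖xhat - x‖ +
      ((1 / 4) * matOpNorm Uf + (17 / 16) * (matOpNorm Ui + matOpNorm Uc)) * ‖hhat - h‖ := by
  -- decomposition
  have key : S xhat hhat - S x h =
      hadam s (fgate xhat hhat - fgate x h) +
      hadam (igate xhat hhat) (ci xhat hhat - ci x h) +
      hadam (ci x h) (igate xhat hhat - igate x h) := by
    rw [hS, hS]
    ext i
    simp [hadam]
    ring
  -- componentwise bounds for hadamard left factors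
  have hs1 : ∀ i, |s i| ≤ 1 := fun i => abs_le.mpr ⟨(hs i).1, (hs i).2⟩
  have hi1 : ∀ i, |igate xhat hhat i| ≤ 1 := by
    intro i
    rw [higate]
    exact abs_sigmoid_le _
  have hc1 : ∀ i, |ci x h i| ≤ 1 := by
    intro i
    rw [hci]
    exact abs_tanh_le _
  -- gate difference bounds
  have hbf := gate_diff Wf Uf bf x xhat h hhat sigmoid (1 / 4) (by norm_num) sigmoid_lip
  have hbi := gate_diff Wi Ui bi x xhat h hhat sigmoid (1 / 4) (by norm_num) sigmoid_lip
  have hbc := gate_diff Wc Uc bc x xhat h hhat Real.tanh 1 (by norm_num) tanh_lip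
  rw [← hfgate, ← hfgate] at hbf
  rw [← higate, ← higate] at hbi
  rw [← hci, ← hci] at hbc
  have hnorm : ‖S xhat hhat - S x h‖ ≤
      ‖fgate xhat hhat - fgate x h‖ + ‖ci xhat hhat - ci x h‖ +
      ‖igate xhat hhat - igate x h‖ := by
    rw [key]
    refine (norm_add_le _ _).trans ?_
    refine add_le_add ((norm_add_le _ _).trans (add_le_add ?_ ?_)) ?_
    · exact hadam_norm_le _ _ hs1
    · exact hadam_norm_le _ _ hi1
    · exact hadam_norm_le _ _ hc1
  have nWf : 0 ≤ matOpNorm Wf := norm_nonneg _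
  have nWi : 0 ≤ matOpNorm Wi := norm_nonneg _
  have nWc : 0 ≤ matOpNorm Wc := norm_nonneg _
  have nUf : 0 ≤ matOpNorm Uf := norm_nonneg _
  have nUi : 0 ≤ matOpNorm Ui := norm_nonneg _
  have nUc : 0 ≤ matOpNorm Uc := norm_nonneg _
  have ndx : 0 ≤ ‖xhat - x‖ := norm_nonneg _
  have ndh : 0 ≤ ‖hhat - h‖ := norm_nonneg _
  nlinarith [mul_nonneg nWi ndx, mul_nonneg nWc ndx, mul_nonneg nUi ndh, mul_nonneg nUc ndh]
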